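/- Let Φ be a CNF formula in which every clause has at most 3 literals and every variable occurs exactly twice positively and once negatively. In the gadget graph G constructed from Φ (with a diamond-and-hat variable gadget per variable and a triangle-chain clause gadget per clause, connected by link-structures, and 2n + 2m terminals), if Φ is satisfiable then (G,T) has an edge multiway cut of weight at most 7n + 2m, where n is the number of variables and m the number of clauses. -/

import Mathlib

/-- `S` is an edge multiway cut for `(G, T)`. -/
def EdgeMultiwayCut {V : Type*} (G : SimpleGraph V) (T : Set V) (S : Set (Sym2 V)) : Prop :=
  ∀ t₁ ∈ T, ∀ t₂ ∈ T, t₁ ≠ t₂ → ¬ (G.deleteEdges S).Reachable t₁ t₂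

/-- Vertices of the gadget graph built from a 2P1N-3SAT formula with variables
`Fin n` and clauses `Fin m` of sizes `size j ∈ {2,3}`:
* `varT i b` : the positive (`b = true`) and negative (`b = false`) terminal of the
  variable gadget of `xᵢ`;
* `clT j b`  : the two terminals of the clause gadget of `cⱼ`;
* `gv i k`   : the three non-link, non-terminal vertices of the variable gadget of `xᵢ`
  (`k = 0`: the diamond vertex attached to the positive terminal; `k = 1`: the shared
  vertex of the diamond and the hat; `k = 2`: the hat vertex attached to the negative
  terminal);
* `link i k` : the three links of the variable gadget of `xᵢ` (`k = 0, 1`: diamond links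
  for the two positive occurrences, `k = 2`: hat link for the negative occurrence),
  identified with the corresponding clause links;
* `chain j p`: the `size j + 1` non-link, non-terminal vertices of the chain of
  `size j` triangles of the clause gadget of `cⱼ`. -/
inductive GadgetVtx (n m : ℕ) (size : Fin m → ℕ) where
  | varT : Fin n → Bool → GadgetVtx n m size
  | clT : Fin m → Bool → GadgetVtx n m size
  | gv : Fin n → Fin 3 → GadgetVtx n m size
  | link : Fin n → Fin 3 → GadgetVtx n m size
  | chain : (j : Fin m) → Fin (size j + 1) → GadgetVtx n m size

/-- Directed edge weights of the gadget graph (each edge is recorded in one direction;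
the weight `0` means "no edge").  `occ` is the bijection matching the `p`-th literal
slot of clause `j` with an occurrence slot `(i, k)` of variable `xᵢ` (`k = 0, 1`
positive occurrences, `k = 2` the negative occurrence).  Terminal edges have weight 3,
clause-triangle bases weight 2, and all other gadget edges (variable bases and
connector edges) weight 1. -/
def gadgetWeight (n m : ℕ) (size : Fin m → ℕ)
    (occ : (Σ j : Fin m, Fin (size j)) ≃ (Fin n × Fin 3)) :
    GadgetVtx n m size → GadgetVtx n m size → ℚ
  | GadgetVtx.varT i true, GadgetVtx.gv i' k => if i = i' ∧ k = 0 then 3 else 0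
  | GadgetVtx.varT i false, GadgetVtx.gv i' k => if i = i' ∧ k = 2 then 3 else 0
  | GadgetVtx.gv i k, GadgetVtx.gv i' k' =>
      if i = i' ∧ ((k = 0 ∧ k' = 1) ∨ (k = 1 ∧ k' = 2)) then 1 else 0
  | GadgetVtx.gv i k, GadgetVtx.link i' k' =>
      if i = i' ∧ (((k = 0 ∨ k = 1) ∧ (k' = 0 ∨ k' = 1)) ∨ ((k = 1 ∨ k = 2) ∧ k' = 2))
        then 1 else 0
  | GadgetVtx.clT j true, GadgetVtx.chain j' p => if j = j' ∧ p.val = 0 then 3 else 0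
  | GadgetVtx.clT j false, GadgetVtx.chain j' p => if j = j' ∧ p.val = size j' then 3 else 0
  | GadgetVtx.chain j p, GadgetVtx.chain j' q =>
      if j = j' ∧ q.val = p.val + 1 then 2 else 0
  | GadgetVtx.chain j q, GadgetVtx.link i k =>
      if ∃ p : Fin (size j), occ ⟨j, p⟩ = (i, k) ∧ (q.val = p.val ∨ q.val = p.val + 1)
        then 1 else 0
  | _, _ => 0

/-- The gadget graph: there is an edge exactly where `gadgetWeight` is nonzero. -/
def gadgetGraph (n m : ℕ) (size : Fin m → ℕ)
    (occ : (Σ j : Fin m, Fin (size j)) ≃ (Fin n × Fin 3)) :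
    SimpleGraph (GadgetVtx n m size) :=
  SimpleGraph.fromRel (fun a b => gadgetWeight n m size occ a b ≠ 0)

/-- The (symmetric) weight of an unordered edge of the gadget graph. -/
def gadgetOmega (n m : ℕ) (size : Fin m → ℕ)
    (occ : (Σ j : Fin m, Fin (size j)) ≃ (Fin n × Fin 3)) :
    Sym2 (GadgetVtx n m size) → ℚ :=
  Sym2.lift ⟨fun a b => gadgetWeight n m size occ a b + gadgetWeight n m size occ b a,
    fun a b => add_comm _ _⟩

/-- The `2n + 2m` terminals of the gadget graph. -/
def gadgetTerminals (n m : ℕ) (size : Fin m → ℕ) : Set (GadgetVtx n m size) :=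
  {x | (∃ i b, x = GadgetVtx.varT i b) ∨ (∃ j b, x = GadgetVtx.clT j b)}


deriving instance DecidableEq for GadgetVtx

namespace MWCaux

open GadgetVtx

variable {n m : ℕ} {size : Fin m → ℕ}
variable (occ : (Σ j : Fin m, Fin (size j)) ≃ (Fin n × Fin 3)) (A : Fin n → Bool)
variable (P : ∀ j : Fin m, Fin (size j))





def Live (A : Fin n → Bool) (i : Fin n) (k : Fin 3) : Prop :=
  (A i = true ∧ k ≠ 2) ∨ (A i = false ∧ k = 2)

instance (A : Fin n → Bool) (i : Fin n) (k : Fin 3) : Decidable (Live A i k) := by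
  unfold Live; infer_instance

def varCut (A : Fin n → Bool) (i : Fin n) : Finset (Sym2 (GadgetVtx n m size)) :=
  if A i then {s(gv i 1, gv i 2), s(gv i 1, link i 2), s(gv i 2, link i 2)}
  else {s(gv i 0, gv i 1), s(gv i 0, link i 0), s(gv i 0, link i 1),
        s(gv i 1, link i 0), s(gv i 1, link i 1)}

def baseCut (P : ∀ j : Fin m, Fin (size j)) (j : Fin m) :
    Finset (Sym2 (GadgetVtx n m size)) :=
  {s(chain j (P j).castSucc, chain j (P j).succ)}

def linkCut (occ : (Σ j : Fin m, Fin (size j)) ≃ (Fin n × Fin 3)) (i : Fin n) (k : Fin 3) :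
    Finset (Sym2 (GadgetVtx n m size)) :=
  {s(chain (occ.symm (i,k)).1 (occ.symm (i,k)).2.castSucc, link i k),
   s(chain (occ.symm (i,k)).1 (occ.symm (i,k)).2.succ, link i k)}

def cutSet (occ : (Σ j : Fin m, Fin (size j)) ≃ (Fin n × Fin 3)) (A : Fin n → Bool)
    (P : ∀ j : Fin m, Fin (size j)) : Finset (Sym2 (GadgetVtx n m size)) :=
  Finset.univ.biUnion (varCut A) ∪ Finset.univ.biUnion (baseCut P) ∪
    (Finset.univ.filter (fun ik : Fin n × Fin 3 => Live A ik.1 ik.2)).biUnion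
      (fun ik => linkCut occ ik.1 ik.2)

def label (occ : (Σ j : Fin m, Fin (size j)) ≃ (Fin n × Fin 3)) (A : Fin n → Bool)
    (P : ∀ j : Fin m, Fin (size j)) : GadgetVtx n m size → Bool × (Fin n ⊕ Fin m)
  | varT i b => (b, .inl i)
  | clT j b => (b, .inr j)
  | gv i k => (if k = 0 then true else if k = 1 then A i else false, .inl i)
  | link i k =>
      if Live A i k then (A i, .inl i)
      else (decide ((occ.symm (i,k)).2.val ≤ (P (occ.symm (i,k)).1).val),
            .inr (occ.symm (i,k)).1)
  | chain j q => (decide (q.val ≤ (P j).val), .inr j)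








lemma mem_cut_of_var (i : Fin n) {e} (he : e ∈ (varCut A i : Finset (Sym2 (GadgetVtx n m size)))) :
    e ∈ cutSet occ A P :=
  Finset.mem_union_left _ (Finset.mem_union_left _
    (Finset.mem_biUnion.2 ⟨i, Finset.mem_univ _, he⟩))

lemma mem_cut_of_base (j : Fin m) :
    s(chain j (P j).castSucc, chain j (P j).succ) ∈ cutSet occ A P :=
  Finset.mem_union_left _ (Finset.mem_union_right _
    (Finset.mem_biUnion.2 ⟨j, Finset.mem_univ _, by simp [baseCut]⟩))

lemma mem_cut_of_link (i : Fin n) (k : Fin 3) (hl : Live A i k) {e}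
    (he : e ∈ linkCut occ i k) : e ∈ cutSet occ A P :=
  Finset.mem_union_right _
    (Finset.mem_biUnion.2 ⟨(i, k), Finset.mem_filter.2 ⟨Finset.mem_univ _, hl⟩, he⟩)

lemma key (hP : ∀ j, Live A (occ ⟨j, P j⟩).1 (occ ⟨j, P j⟩).2)
    (a b : GadgetVtx n m size) (hw : gadgetWeight n m size occ a b ≠ 0)
    (hS : s(a,b) ∉ cutSet occ A P) : label occ A P a = label occ A P b := by
  cases a with
  | varT i₁ b₁ =>
    cases b with
    | gv i₂ k₂ =>
      cases b₁ <;> simp only [gadgetWeight] at hw <;>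
        obtain ⟨⟨rfl, rfl⟩, -⟩ := ite_ne_right_iff.1 hw <;> simp [label]
    | varT i b => cases b₁ <;> simp [gadgetWeight] at hw
    | clT j b => cases b₁ <;> simp [gadgetWeight] at hw
    | link i k => cases b₁ <;> simp [gadgetWeight] at hw
    | chain j q => cases b₁ <;> simp [gadgetWeight] at hw
  | clT j₁ b₁ =>
    cases b with
    | chain j₂ q₂ =>
      cases b₁ with
      | false =>
        simp only [gadgetWeight] at hw
        obtain ⟨⟨rfl, hq⟩, -⟩ := ite_ne_right_iff.1 hw
        have h2 : ¬ (q₂.val ≤ (P j₁).val) := by have := (P j₁).isLt; omega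
        simp [label, h2]
      | true =>
        simp only [gadgetWeight] at hw
        obtain ⟨⟨rfl, hq⟩, -⟩ := ite_ne_right_iff.1 hw
        simp [label, hq]
    | varT i b => cases b₁ <;> simp [gadgetWeight] at hw
    | clT j b => cases b₁ <;> simp [gadgetWeight] at hw
    | link i k => cases b₁ <;> simp [gadgetWeight] at hw
    | gv i k => cases b₁ <;> simp [gadgetWeight] at hw
  | gv i₁ k₁ =>
    cases b with
    | gv i₂ k₂ =>
      simp only [gadgetWeight] at hw
      obtain ⟨⟨rfl, h⟩, -⟩ := ite_ne_right_iff.1 hw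
      rcases h with ⟨rfl, rfl⟩ | ⟨rfl, rfl⟩
      · rcases hAi : A i₁ with _ | _
        · exact absurd (mem_cut_of_var occ A P i₁ (by simp [varCut, hAi])) hS
        · simp [label, hAi]
      · rcases hAi : A i₁ with _ | _
        · simp [label, hAi]
        · exact absurd (mem_cut_of_var occ A P i₁ (by simp [varCut, hAi])) hS
    | link i₂ k₂ =>
      simp only [gadgetWeight] at hw
      obtain ⟨⟨rfl, h⟩, -⟩ := ite_ne_right_iff.1 hw
      rcases hAi : A i₁ with _ | _
      · -- A i₁ = false
        rcases h with ⟨hk, hk'⟩ | ⟨hk, rfl⟩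
        · exact absurd (mem_cut_of_var occ A P i₁ (by
            rcases hk with rfl | rfl <;> rcases hk' with rfl | rfl <;>
              simp [varCut, hAi])) hS
        · have hlive : Live A i₁ (2 : Fin 3) := Or.inr ⟨hAi, rfl⟩
          rcases hk with rfl | rfl <;> simp [label, hlive, hAi]
      · -- A i₁ = true
        rcases h with ⟨hk, hk'⟩ | ⟨hk, rfl⟩
        · have hlive : Live A i₁ k₂ := Or.inl ⟨hAi, by rcases hk' with rfl | rfl <;> decide⟩
          rcases hk with rfl | rfl <;> simp [label, hlive, hAi]
        · exact absurd (mem_cut_of_var occ A P i₁ (by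
            rcases hk with rfl | rfl <;> simp [varCut, hAi])) hS
    | varT i b => simp [gadgetWeight] at hw
    | clT j b => simp [gadgetWeight] at hw
    | chain j q => simp [gadgetWeight] at hw
  | link i₁ k₁ =>
    cases b <;> simp [gadgetWeight] at hw
  | chain j₁ q₁ =>
    cases b with
    | link i₂ k₂ =>
      simp only [gadgetWeight] at hw
      obtain ⟨⟨p, hop, hq⟩, -⟩ := ite_ne_right_iff.1 hw
      have hsymm : occ.symm (i₂, k₂) = ⟨j₁, p⟩ := by rw [← hop, Equiv.symm_apply_apply]
      by_cases hlive : Live A i₂ k₂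
      · refine absurd (mem_cut_of_link occ A P i₂ k₂ hlive ?_) hS
        rw [linkCut, hsymm]
        rcases hq with hq | hq
        · have : q₁ = p.castSucc := Fin.ext (by simpa using hq)
          rw [this]
          exact Finset.mem_insert_self _ _
        · have : q₁ = p.succ := Fin.ext (by simpa [Fin.val_succ] using hq)
          rw [this]
          exact Finset.mem_insert.2 (Or.inr (Finset.mem_singleton_self _))
      · have hp : p ≠ P j₁ := by
          rintro rfl
          have := hP j₁
          rw [hop] at this
          exact hlive this
        have hpv : p.val ≠ (P j₁).val := fun h => hp (Fin.ext h)
        have hiff : (q₁.val ≤ (P j₁).val) ↔ (p.val ≤ (P j₁).val) := by omega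
        simp only [label, if_neg hlive]
        rw [hsymm]
        simp [hiff]
    | chain j₂ q₂ =>
      simp only [gadgetWeight] at hw
      obtain ⟨⟨rfl, hq⟩, -⟩ := ite_ne_right_iff.1 hw
      have hne : q₁.val ≠ (P j₁).val := by
        intro h
        apply hS
        have e1 : q₁ = (P j₁).castSucc := Fin.ext (by simpa using h)
        have e2 : q₂ = (P j₁).succ := Fin.ext (by simp [Fin.val_succ]; omega)
        rw [e1, e2]
        exact mem_cut_of_base occ A P j₁
      have hiff : (q₁.val ≤ (P j₁).val) ↔ (q₂.val ≤ (P j₁).val) := by omega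
      simp [label, hiff]
    | varT i b => simp [gadgetWeight] at hw
    | clT j b => simp [gadgetWeight] at hw
    | gv i k => simp [gadgetWeight] at hw








lemma omega_mk (a b : GadgetVtx n m size) :
    gadgetOmega n m size occ s(a, b)
      = gadgetWeight n m size occ a b + gadgetWeight n m size occ b a := rfl

lemma weight_nonneg (a b : GadgetVtx n m size) : 0 ≤ gadgetWeight n m size occ a b := by
  cases a with
  | varT i b₁ => cases b₁ <;> cases b <;> simp only [gadgetWeight] <;> (try split) <;> norm_num
  | clT j b₁ => cases b₁ <;> cases b <;> simp only [gadgetWeight] <;> (try split) <;> norm_num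
  | gv i k => cases b <;> simp only [gadgetWeight] <;> (try split) <;> norm_num
  | link i k => cases b <;> simp only [gadgetWeight] <;> (try split) <;> norm_num
  | chain j q => cases b <;> simp only [gadgetWeight] <;> (try split) <;> norm_num

lemma omega_nonneg (e : Sym2 (GadgetVtx n m size)) : 0 ≤ gadgetOmega n m size occ e := by
  induction e using Sym2.ind with
  | _ a b => rw [omega_mk]; exact add_nonneg (weight_nonneg occ a b) (weight_nonneg occ b a)

lemma o_hat1 (i : Fin n) : gadgetOmega n m size occ s(gv i 1, gv i 2) = 1 := by
  simp [omega_mk, gadgetWeight]; try omega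

lemma o_hat2 (i : Fin n) (k : Fin 3) (hk : k = 1 ∨ k = 2) :
    gadgetOmega n m size occ s(gv i k, link i 2) = 1 := by
  rcases hk with rfl | rfl <;> simp [omega_mk, gadgetWeight]

lemma o_diam0 (i : Fin n) : gadgetOmega n m size occ s(gv i 0, gv i 1) = 1 := by
  simp [omega_mk, gadgetWeight]; try omega

lemma o_diam (i : Fin n) (k k' : Fin 3) (hk : k = 0 ∨ k = 1) (hk' : k' = 0 ∨ k' = 1) :
    gadgetOmega n m size occ s(gv i k, link i k') = 1 := by
  rcases hk with rfl | rfl <;> rcases hk' with rfl | rfl <;> simp [omega_mk, gadgetWeight]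

lemma o_base (j : Fin m) (p : Fin (size j)) :
    gadgetOmega n m size occ s(chain j p.castSucc, chain j p.succ) = 2 := by
  simp [omega_mk, gadgetWeight]; try omega

lemma o_conn (i : Fin n) (k : Fin 3) (q : Fin (size (occ.symm (i,k)).1 + 1))
    (hq : q.val = (occ.symm (i,k)).2.val ∨ q.val = (occ.symm (i,k)).2.val + 1) :
    gadgetOmega n m size occ s(chain (occ.symm (i,k)).1 q, link i k) = 1 := by
  have hex : ∃ p : Fin (size (occ.symm (i,k)).1),
      occ ⟨(occ.symm (i,k)).1, p⟩ = (i,k) ∧ (q.val = p.val ∨ q.val = p.val + 1) :=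
    ⟨(occ.symm (i,k)).2, by rw [Sigma.eta, Equiv.apply_symm_apply], hq⟩
  simp [omega_mk, gadgetWeight, hex]


lemma sum_insert_le' {α : Type*} [DecidableEq α] (f : α → ℚ) (hf : ∀ x, 0 ≤ f x)
    (a : α) (s : Finset α) : ∑ x ∈ insert a s, f x ≤ f a + ∑ x ∈ s, f x := by
  by_cases h : a ∈ s
  · rw [Finset.insert_eq_self.2 h]
    have := hf a
    linarith
  · rw [Finset.sum_insert h]

lemma sum_union_le' {α : Type*} [DecidableEq α] (f : α → ℚ) (hf : ∀ x, 0 ≤ f x)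
    (s t : Finset α) : ∑ x ∈ s ∪ t, f x ≤ ∑ x ∈ s, f x + ∑ x ∈ t, f x := by
  rw [← Finset.union_sdiff_self_eq_union, Finset.sum_union Finset.disjoint_sdiff]
  have : ∑ x ∈ t \ s, f x ≤ ∑ x ∈ t, f x :=
    Finset.sum_le_sum_of_subset_of_nonneg (Finset.sdiff_subset) (fun x _ _ => hf x)
  linarith

lemma sum_biUnion_le' {ι α : Type*} [DecidableEq α] (f : α → ℚ) (hf : ∀ x, 0 ≤ f x)
    (s : Finset ι) (t : ι → Finset α) :
    ∑ x ∈ s.biUnion t, f x ≤ ∑ i ∈ s, ∑ x ∈ t i, f x := by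
  classical
  induction s using Finset.induction_on with
  | empty => simp
  | insert _ _ h ih =>
    rw [Finset.biUnion_insert, Finset.sum_insert h]
    exact (sum_union_le' f hf _ _).trans (by linarith)

lemma sum2' {α : Type*} [DecidableEq α] (f : α → ℚ) (hf : ∀ x, 0 ≤ f x) (a b : α) :
    ∑ x ∈ ({a, b} : Finset α), f x ≤ f a + f b := by
  have h1 := sum_insert_le' f hf a ({b} : Finset α)
  rw [Finset.sum_singleton] at h1
  exact h1

lemma sum3' {α : Type*} [DecidableEq α] (f : α → ℚ) (hf : ∀ x, 0 ≤ f x) (a b c : α) :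
    ∑ x ∈ ({a, b, c} : Finset α), f x ≤ f a + f b + f c := by
  have h1 := sum_insert_le' f hf a ({b, c} : Finset α)
  have h2 := sum2' f hf b c
  linarith

lemma sum5' {α : Type*} [DecidableEq α] (f : α → ℚ) (hf : ∀ x, 0 ≤ f x) (a b c d e : α) :
    ∑ x ∈ ({a, b, c, d, e} : Finset α), f x ≤ f a + f b + f c + f d + f e := by
  have h1 := sum_insert_le' f hf a ({b, c, d, e} : Finset α)
  have h2 := sum_insert_le' f hf b ({c, d, e} : Finset α)
  have h3 := sum3' f hf c d e
  linarith

lemma varCut_sum (i : Fin n) :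
    ∑ e ∈ (varCut A i : Finset (Sym2 (GadgetVtx n m size))), gadgetOmega n m size occ e
      ≤ if A i then (3:ℚ) else 5 := by
  unfold varCut
  split
  · refine (sum3' _ (omega_nonneg occ) _ _ _).trans ?_
    rw [o_hat1 occ i, o_hat2 occ i 1 (Or.inl rfl), o_hat2 occ i 2 (Or.inr rfl)]
    norm_num
  · refine (sum5' _ (omega_nonneg occ) _ _ _ _ _).trans ?_
    rw [o_diam0 occ i, o_diam occ i 0 0 (Or.inl rfl) (Or.inl rfl),
        o_diam occ i 0 1 (Or.inl rfl) (Or.inr rfl),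
        o_diam occ i 1 0 (Or.inr rfl) (Or.inl rfl),
        o_diam occ i 1 1 (Or.inr rfl) (Or.inr rfl)]
    norm_num

lemma linkCut_sum (i : Fin n) (k : Fin 3) :
    ∑ e ∈ (linkCut occ i k : Finset (Sym2 (GadgetVtx n m size))), gadgetOmega n m size occ e
      ≤ 2 := by
  unfold linkCut
  refine (sum2' _ (omega_nonneg occ) _ _).trans ?_
  rw [o_conn occ i k _ (Or.inl (by simp)), o_conn occ i k _ (Or.inr (by simp))]
  norm_num

lemma cut_weight :
    ∑ e ∈ (cutSet occ A P : Finset (Sym2 (GadgetVtx n m size))), gadgetOmega n m size occ e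
      ≤ 7 * (n : ℚ) + 2 * (m : ℚ) := by
  have hnn : ∀ e, 0 ≤ gadgetOmega n m size occ e := omega_nonneg occ
  have h0 := sum_union_le' (gadgetOmega n m size occ) hnn
    (Finset.univ.biUnion (varCut A) ∪ Finset.univ.biUnion (baseCut P))
    ((Finset.univ.filter (fun ik : Fin n × Fin 3 => Live A ik.1 ik.2)).biUnion
      (fun ik => linkCut occ ik.1 ik.2))
  have h1 := sum_union_le' (gadgetOmega n m size occ) hnn
    (Finset.univ.biUnion (varCut A)) (Finset.univ.biUnion (baseCut P))
  have hSV : ∑ e ∈ Finset.univ.biUnion (varCut A), gadgetOmega n m size occ e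
      ≤ ∑ i : Fin n, (if A i then (3:ℚ) else 5) :=
    (sum_biUnion_le' _ hnn _ _).trans (Finset.sum_le_sum fun i _ => varCut_sum occ A i)
  have hSB : ∑ e ∈ Finset.univ.biUnion (baseCut P), gadgetOmega n m size occ e
      ≤ 2 * (m : ℚ) := by
    refine (sum_biUnion_le' _ hnn _ _).trans ?_
    have hb : ∀ j : Fin m, ∑ e ∈ baseCut P j, gadgetOmega n m size occ e = 2 := fun j => by
      rw [baseCut, Finset.sum_singleton, o_base]
    rw [Finset.sum_congr rfl fun j _ => hb j, Finset.sum_const, Finset.card_univ,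
      Fintype.card_fin, nsmul_eq_mul]
    linarith
  have hSL : ∑ e ∈ (Finset.univ.filter (fun ik : Fin n × Fin 3 => Live A ik.1 ik.2)).biUnion
        (fun ik => linkCut occ ik.1 ik.2), gadgetOmega n m size occ e
      ≤ ∑ i : Fin n, (if A i then (4:ℚ) else 2) := by
    refine (sum_biUnion_le' _ hnn _ _).trans ?_
    refine (Finset.sum_le_sum fun ik _ => linkCut_sum occ ik.1 ik.2).trans ?_
    rw [Finset.sum_filter, Fintype.sum_prod_type]
    refine le_of_eq (Finset.sum_congr rfl fun i _ => ?_)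
    cases hAi : A i <;> rw [Fin.sum_univ_three] <;> simp [Live, hAi] <;> norm_num
  have hvar : ∑ i : Fin n, (if A i then (3:ℚ) else 5)
      + ∑ i : Fin n, (if A i then (4:ℚ) else 2) = 7 * (n : ℚ) := by
    rw [← Finset.sum_add_distrib]
    have h7 : ∀ i : Fin n, ((if A i then (3:ℚ) else 5) + (if A i then (4:ℚ) else 2)) = 7 :=
      fun i => by cases A i <;> norm_num
    rw [Finset.sum_congr rfl fun i _ => h7 i, Finset.sum_const, Finset.card_univ,
      Fintype.card_fin, nsmul_eq_mul]
    ring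
  calc ∑ e ∈ cutSet occ A P, gadgetOmega n m size occ e
      ≤ _ := h0
    _ ≤ 7 * (n : ℚ) + 2 * (m : ℚ) := by linarith

lemma cut_sub_edgeSet (e : Sym2 (GadgetVtx n m size)) (he : e ∈ cutSet occ A P) :
    e ∈ (gadgetGraph n m size occ).edgeSet := by
  have adj_of : ∀ (a b : GadgetVtx n m size), a ≠ b →
      gadgetOmega n m size occ s(a,b) ≠ 0 → s(a,b) ∈ (gadgetGraph n m size occ).edgeSet := by
    intro a b hab h
    rw [SimpleGraph.mem_edgeSet, gadgetGraph, SimpleGraph.fromRel_adj]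
    refine ⟨hab, ?_⟩
    by_contra hc
    push_neg at hc
    exact h (by rw [omega_mk, hc.1, hc.2, add_zero])
  rcases Finset.mem_union.1 he with h | h
  · rcases Finset.mem_union.1 h with h | h
    · obtain ⟨i, -, hi⟩ := Finset.mem_biUnion.1 h
      unfold varCut at hi
      split at hi <;> simp only [Finset.mem_insert, Finset.mem_singleton] at hi
      · rcases hi with rfl | rfl | rfl
        · exact adj_of _ _ (by simp) (by rw [o_hat1 occ i]; norm_num)
        · exact adj_of _ _ (by simp) (by rw [o_hat2 occ i 1 (Or.inl rfl)]; norm_num)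
        · exact adj_of _ _ (by simp) (by rw [o_hat2 occ i 2 (Or.inr rfl)]; norm_num)
      · rcases hi with rfl | rfl | rfl | rfl | rfl
        · exact adj_of _ _ (by simp) (by rw [o_diam0 occ i]; norm_num)
        · exact adj_of _ _ (by simp) (by rw [o_diam occ i 0 0 (Or.inl rfl) (Or.inl rfl)]; norm_num)
        · exact adj_of _ _ (by simp) (by rw [o_diam occ i 0 1 (Or.inl rfl) (Or.inr rfl)]; norm_num)
        · exact adj_of _ _ (by simp) (by rw [o_diam occ i 1 0 (Or.inr rfl) (Or.inl rfl)]; norm_num)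
        · exact adj_of _ _ (by simp) (by rw [o_diam occ i 1 1 (Or.inr rfl) (Or.inr rfl)]; norm_num)
    · obtain ⟨j, -, hj⟩ := Finset.mem_biUnion.1 h
      rw [baseCut, Finset.mem_singleton] at hj
      subst hj
      refine adj_of _ _ ?_ (by rw [o_base occ j]; norm_num)
      intro hc
      simp only [GadgetVtx.chain.injEq, heq_eq_eq, true_and] at hc
      have := congrArg Fin.val hc
      simp [Fin.val_succ] at this
  · obtain ⟨⟨i, k⟩, -, hik⟩ := Finset.mem_biUnion.1 h
    unfold linkCut at hik
    simp only [Finset.mem_insert, Finset.mem_singleton] at hik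
    rcases hik with rfl | rfl
    · exact adj_of _ _ (by simp) (by rw [o_conn occ i k _ (Or.inl (by simp))]; norm_num)
    · exact adj_of _ _ (by simp) (by rw [o_conn occ i k _ (Or.inr (by simp))]; norm_num)

end MWCaux


/-- If the 2P1N-3SAT formula (clauses of size 2 or 3, each variable occurring twice
positively and once negatively, encoded by the slot bijection `occ`) is satisfied by the
assignment `A`, then the gadget graph has an edge multiway cut of weight at most
`7n + 2m`. -/
theorem satisfiable_implies_cut_of_weight_7n_2m (n m : ℕ) (size : Fin m → ℕ)
    (hsize : ∀ j, 2 ≤ size j ∧ size j ≤ 3)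
    (occ : (Σ j : Fin m, Fin (size j)) ≃ (Fin n × Fin 3))
    (A : Fin n → Bool)
    (hA : ∀ j : Fin m, ∃ p : Fin (size j),
      (A (occ ⟨j, p⟩).1 = true ∧ (occ ⟨j, p⟩).2 ≠ 2) ∨
      (A (occ ⟨j, p⟩).1 = false ∧ (occ ⟨j, p⟩).2 = 2)) :
    ∃ S : Set (Sym2 (GadgetVtx n m size)),
      S ⊆ (gadgetGraph n m size occ).edgeSet ∧
      EdgeMultiwayCut (gadgetGraph n m size occ) (gadgetTerminals n m size) S ∧
      ∑ᶠ e ∈ S, gadgetOmega n m size occ e ≤ 7 * (n : ℚ) + 2 * (m : ℚ) := by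
  classical
  let P : ∀ j : Fin m, Fin (size j) := fun j => (hA j).choose
  have hP : ∀ j, MWCaux.Live A (occ ⟨j, P j⟩).1 (occ ⟨j, P j⟩).2 := fun j =>
    show MWCaux.Live A (occ ⟨j, P j⟩).1 (occ ⟨j, P j⟩).2 from (hA j).choose_spec
  refine ⟨↑(MWCaux.cutSet occ A P), ?_, ?_, ?_⟩
  · intro e he
    rw [Finset.mem_coe] at he
    exact MWCaux.cut_sub_edgeSet occ A P e he
  · intro t₁ ht₁ t₂ ht₂ hne hreach
    have hadj : ∀ a b, ((gadgetGraph n m size occ).deleteEdges ↑(MWCaux.cutSet occ A P)).Adj a b →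
        MWCaux.label occ A P a = MWCaux.label occ A P b := by
      intro a b hab
      rw [SimpleGraph.deleteEdges_adj] at hab
      obtain ⟨hab1, hab2⟩ := hab
      rw [gadgetGraph, SimpleGraph.fromRel_adj] at hab1
      rw [Finset.mem_coe] at hab2
      rcases hab1.2 with h | h
      · exact MWCaux.key occ A P hP a b h hab2
      · exact (MWCaux.key occ A P hP b a h (by rwa [Sym2.eq_swap] at hab2)).symm
    have hlab : MWCaux.label occ A P t₁ = MWCaux.label occ A P t₂ := by
      obtain ⟨p⟩ := hreach
      clear ht₁ ht₂ hne
      induction p with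
      | nil => rfl
      | cons h _ ih => exact (hadj _ _ h).trans ih
    rcases ht₁ with ⟨i₁, b₁, rfl⟩ | ⟨j₁, b₁, rfl⟩ <;>
      rcases ht₂ with ⟨i₂, b₂, rfl⟩ | ⟨j₂, b₂, rfl⟩ <;>
      simp only [MWCaux.label, Prod.mk.injEq, Sum.inl.injEq, Sum.inr.injEq] at hlab
    · exact hne (by rw [hlab.1, hlab.2])
    · exact absurd hlab.2 (by simp)
    · exact absurd hlab.2 (by simp)
    · exact hne (by rw [hlab.1, hlab.2])
  · rw [finsum_mem_coe_finset]
    exact MWCaux.cut_weight occ A P
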